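/- The function t ↦ π·csc(πt)·(−(π(2t−1)·cot(πt) + π·csc(πt) − 4)) is nonnegative and decreasing for t ∈ [1/4, 1/2]. -/

import Mathlib

open Real

private lemma aux_sin_pos (t : ℝ) (h1 : (1/4 : ℝ) ≤ t) (h2 : t ≤ 1/2) :
    0 < Real.sin (Real.pi * t) := by
  apply Real.sin_pos_of_pos_of_lt_pi
  · nlinarith [Real.pi_pos]
  · nlinarith [Real.pi_pos]

private lemma aux_deriv (t : ℝ) (hs : Real.sin (Real.pi * t) ≠ 0) :
    HasDerivAt (fun t : ℝ => Real.pi * (Real.sin (Real.pi * t))⁻¹ *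
        (-(Real.pi * (2 * t - 1) * (Real.cos (Real.pi * t) / Real.sin (Real.pi * t))
            + Real.pi * (Real.sin (Real.pi * t))⁻¹ - 4)))
      (Real.pi ^ 2 * (-6 * Real.sin (Real.pi * t) * Real.cos (Real.pi * t)
          + Real.pi * (2 * t - 1) * (1 + Real.cos (Real.pi * t) ^ 2)
          + 2 * Real.pi * Real.cos (Real.pi * t)) / Real.sin (Real.pi * t) ^ 3) t := by
  have hS : HasDerivAt (fun x : ℝ => Real.sin (Real.pi * x))
      (Real.cos (Real.pi * t) * Real.pi) t := by
    simpa [Function.comp_def] using (Real.hasDerivAt_sin (Real.pi * t)).comp t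
      ((hasDerivAt_id t).const_mul Real.pi)
  have hC : HasDerivAt (fun x : ℝ => Real.cos (Real.pi * x))
      (-Real.sin (Real.pi * t) * Real.pi) t := by
    simpa [Function.comp_def] using (Real.hasDerivAt_cos (Real.pi * t)).comp t
      ((hasDerivAt_id t).const_mul Real.pi)
  have hInv : HasDerivAt (fun x : ℝ => (Real.sin (Real.pi * x))⁻¹)
      (-(Real.cos (Real.pi * t) * Real.pi) / Real.sin (Real.pi * t) ^ 2) t := hS.inv hs
  have hlin : HasDerivAt (fun x : ℝ => Real.pi * (2 * x - 1)) (Real.pi * 2) t := by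
    simpa using (((hasDerivAt_id t).const_mul (2:ℝ)).sub_const (1:ℝ)).const_mul Real.pi
  have hfrac := hC.div hS hs
  have hmul := hlin.mul hfrac
  have h2 := hInv.const_mul Real.pi
  have hinner := ((hmul.add h2).sub_const (4:ℝ)).neg
  have hmain := (hInv.const_mul Real.pi).mul hinner
  refine hmain.congr_deriv ?_
  symm
  simp only [Pi.mul_apply, Pi.div_apply, Pi.neg_apply, Pi.add_apply]
  have hpy : Real.sin (Real.pi * t) ^ 2 + Real.cos (Real.pi * t) ^ 2 = 1 :=
    Real.sin_sq_add_cos_sq _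
  field_simp
  ring_nf
  linear_combination (Real.pi * (1 - 2 * t)) * hpy

private lemma aux_key (t : ℝ) (h1 : (1/4 : ℝ) ≤ t) (h2 : t ≤ 1/2) :
    -6 * Real.sin (Real.pi * t) * Real.cos (Real.pi * t)
      + Real.pi * (2 * t - 1) * (1 + Real.cos (Real.pi * t) ^ 2)
      + 2 * Real.pi * Real.cos (Real.pi * t) ≤ 0 := by
  have hpi := Real.pi_pos
  set u := Real.pi * t with hu
  have hu1 : Real.pi / 4 ≤ u := by rw [hu]; nlinarith
  have hu2 : u ≤ Real.pi / 2 := by rw [hu]; nlinarith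
  set s := Real.sin u with hsdef
  set c := Real.cos u with hcdef
  have hpy : s ^ 2 + c ^ 2 = 1 := Real.sin_sq_add_cos_sq u
  have hc : 0 ≤ c := Real.cos_nonneg_of_mem_Icc ⟨by linarith, hu2⟩
  have hcu : c ≤ Real.pi / 2 - u := by
    rw [hcdef, ← Real.sin_pi_div_two_sub]
    exact Real.sin_le (by linarith)
  have hs1 : s ≤ 1 := Real.sin_le_one u
  have hshalf : (1/2 : ℝ) ≤ s := by
    have := Real.mul_le_sin (x := u) (by linarith) hu2
    have h315 : Real.pi < 3.15 := Real.pi_lt_d2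
    rw [hsdef]
    calc (1/2 : ℝ) ≤ 2 / Real.pi * u := by
          rw [div_mul_eq_mul_div, le_div_iff₀ hpi]; nlinarith
      _ ≤ Real.sin u := this
  have h315 : Real.pi < 3.15 := Real.pi_lt_d2
  have hA : Real.pi - 3 * s ≤ 1 + c ^ 2 := by nlinarith [sq_nonneg (s - 1/2)]
  have hB : 2 * c ≤ Real.pi - 2 * u := by linarith
  have hpt : Real.pi * (2 * t - 1) = 2 * u - Real.pi := by rw [hu]; ring
  rw [hpt]
  have h1' : 2 * c * (Real.pi - 3 * s) ≤ 2 * c * (1 + c ^ 2) :=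
    mul_le_mul_of_nonneg_left hA (by linarith)
  have h2' : 2 * c * (1 + c ^ 2) ≤ (Real.pi - 2 * u) * (1 + c ^ 2) :=
    mul_le_mul_of_nonneg_right hB (by positivity)
  nlinarith [h1', h2']

theorem stmt_13 :
    (∀ t ∈ Set.Icc (1/4 : ℝ) (1/2),
      0 ≤ Real.pi * (Real.sin (Real.pi * t))⁻¹ *
        (-(Real.pi * (2 * t - 1) * (Real.cos (Real.pi * t) / Real.sin (Real.pi * t))
            + Real.pi * (Real.sin (Real.pi * t))⁻¹ - 4))) ∧
    AntitoneOn (fun t : ℝ => Real.pi * (Real.sin (Real.pi * t))⁻¹ *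
        (-(Real.pi * (2 * t - 1) * (Real.cos (Real.pi * t) / Real.sin (Real.pi * t))
            + Real.pi * (Real.sin (Real.pi * t))⁻¹ - 4)))
      (Set.Icc (1/4 : ℝ) (1/2)) := by
  have hanti : AntitoneOn (fun t : ℝ => Real.pi * (Real.sin (Real.pi * t))⁻¹ *
        (-(Real.pi * (2 * t - 1) * (Real.cos (Real.pi * t) / Real.sin (Real.pi * t))
            + Real.pi * (Real.sin (Real.pi * t))⁻¹ - 4)))
      (Set.Icc (1/4 : ℝ) (1/2)) := by
    apply antitoneOn_of_deriv_nonpos (convex_Icc _ _)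
    · intro x hx
      exact (aux_deriv x (ne_of_gt (aux_sin_pos x hx.1 hx.2))).continuousAt.continuousWithinAt
    · intro x hx
      rw [interior_Icc] at hx
      exact (aux_deriv x (ne_of_gt (aux_sin_pos x hx.1.le hx.2.le))).differentiableAt.differentiableWithinAt
    · intro x hx
      rw [interior_Icc] at hx
      have hsp := aux_sin_pos x hx.1.le hx.2.le
      rw [(aux_deriv x (ne_of_gt hsp)).deriv]
      apply div_nonpos_of_nonpos_of_nonneg
      · exact mul_nonpos_of_nonneg_of_nonpos (sq_nonneg _) (aux_key x hx.1.le hx.2.le)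
      · positivity
  refine ⟨?_, hanti⟩
  intro t ht
  have hhalf : (1/2 : ℝ) ∈ Set.Icc (1/4 : ℝ) (1/2) := by norm_num
  have := hanti ht hhalf ht.2
  have hval : Real.pi * (Real.sin (Real.pi * (1/2 : ℝ)))⁻¹ *
        (-(Real.pi * (2 * (1/2 : ℝ) - 1) * (Real.cos (Real.pi * (1/2 : ℝ)) / Real.sin (Real.pi * (1/2 : ℝ)))
            + Real.pi * (Real.sin (Real.pi * (1/2 : ℝ)))⁻¹ - 4)) = Real.pi * (4 - Real.pi) := by
    have h12 : Real.pi * (1/2 : ℝ) = Real.pi / 2 := by ring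
    rw [h12, Real.sin_pi_div_two, Real.cos_pi_div_two]
    norm_num
  have hge : 0 ≤ Real.pi * (4 - Real.pi) := by
    nlinarith [Real.pi_le_four, Real.pi_pos]
  simp only at this
  rw [hval] at this
  linarith
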